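/- In the MedBoost algorithm run for T = Θ(ln(m)/γ²) rounds on a sample {(x_i, y_i)}_{i=1}^m, if each weak hypothesis h_t satisfies the (η/2, γ)-weak learning condition Σ_i P_t(i)·𝟙[|h_t(x_i) − y_i| ≤ η/2] ≥ 1/2 + γ, then for every i ∈ [m], both weighted γ/2-quantiles of the ensemble predictions at x_i are within η/2 of y_i: max{|Q⁺_{γ/2}(x_i) − y_i|, |Q⁻_{γ/2}(x_i) − y_i|} ≤ η/2. -/

import Mathlib

/-- Weighted upper γ-quantile of the values `v` with weights `a`. -/
noncomputable def wQp {T : ℕ} (γ : ℝ) (v a : Fin T → ℝ) : ℝ :=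
  sInf {z : ℝ | ∃ j : Fin T, v j = z ∧
    (∑ t, if z < v t then a t else 0) / (∑ t, a t) < 1 / 2 - γ}

/-- Weighted lower γ-quantile of the values `v` with weights `a`. -/
noncomputable def wQm {T : ℕ} (γ : ℝ) (v a : Fin T → ℝ) : ℝ :=
  sSup {z : ℝ | ∃ j : Fin T, v j = z ∧
    (∑ t, if v t < z then a t else 0) / (∑ t, a t) < 1 / 2 - γ}

lemma pinsker {p q : ℝ} (hp : 0 < p) (hpq : p ≤ q) (hq : q < 1) :
    2 * (q - p)^2 ≤ p * Real.log (p / q) + (1 - p) * Real.log ((1 - p) / (1 - q)) := by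
  have hq0 : 0 < q := lt_of_lt_of_le hp hpq
  set f : ℝ → ℝ := fun x => p * (Real.log p - Real.log x)
      + (1 - p) * (Real.log (1 - p) - Real.log (1 - x)) - 2 * (x - p)^2 with hf
  have hderiv : ∀ x ∈ Set.Icc p q,
      HasDerivAt f (-(p/x) + (1-p)/(1-x) - 4*(x-p)) x := by
    intro x hx
    have hx0 : 0 < x := lt_of_lt_of_le hp hx.1
    have hx1 : x < 1 := lt_of_le_of_lt hx.2 hq
    have h1 : HasDerivAt (fun x : ℝ => Real.log x) x⁻¹ x :=
      Real.hasDerivAt_log (ne_of_gt hx0)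
    have h2 : HasDerivAt (fun x : ℝ => Real.log (1 - x)) (-(1-x)⁻¹) x := by
      have hin : HasDerivAt (fun x : ℝ => 1 - x) (-1 : ℝ) x := by
        exact (hasDerivAt_id x).const_sub (1:ℝ)
      have := (Real.hasDerivAt_log (x := 1 - x) (by linarith)).comp x hin
      exact this.congr_deriv (by ring)
    have h3 : HasDerivAt (fun x : ℝ => 2 * (x - p)^2) (2 * (2 * (x - p))) x := by
      have := (((hasDerivAt_id x).sub_const p).pow 2).const_mul (2:ℝ)
      simpa using this
    have hsum := (((hasDerivAt_const x (Real.log p)).sub h1).const_mul p).add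
        (((hasDerivAt_const x (Real.log (1-p))).sub h2).const_mul (1-p))
    have := hsum.sub h3
    exact this.congr_deriv (by ring)
  have hmono : MonotoneOn f (Set.Icc p q) := by
    apply monotoneOn_of_deriv_nonneg (convex_Icc p q)
    · exact fun x hx => (hderiv x hx).continuousAt.continuousWithinAt
    · intro x hx
      rw [interior_Icc] at hx
      exact (hderiv x (Set.Ioo_subset_Icc_self hx)).differentiableAt.differentiableWithinAt
    · intro x hx
      rw [interior_Icc] at hx
      rw [(hderiv x (Set.Ioo_subset_Icc_self hx)).deriv]
      have hx0 : 0 < x := lt_of_lt_of_le hp (le_of_lt hx.1)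
      have hx1 : x < 1 := lt_of_lt_of_le hx.2 (le_of_lt hq) |>.trans_le (le_refl 1)
      have hkey : -(p/x) + (1-p)/(1-x) - 4*(x-p)
          = (x - p) * (1 - 2*x)^2 / (x * (1 - x)) := by
        have hxne : x ≠ 0 := ne_of_gt hx0
        have h1xne : (1:ℝ) - x ≠ 0 := by linarith
        field_simp
        ring
      rw [hkey]
      apply div_nonneg
      · have : 0 ≤ x - p := by linarith [hx.1]
        positivity
      · have : 0 < 1 - x := by linarith
        positivity
  have hle := hmono (Set.left_mem_Icc.mpr hpq) (Set.right_mem_Icc.mpr hpq) hpq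
  have hfp : f p = 0 := by simp [hf]
  rw [hfp] at hle
  rw [Real.log_div (ne_of_gt hp) (ne_of_gt hq0),
    Real.log_div (by linarith : (1:ℝ) - p ≠ 0) (by linarith : (1:ℝ) - q ≠ 0)]
  simp only [hf] at hle
  linarith


lemma round_bound {γ g b aa : ℝ} (hγ0 : 0 < γ) (hγ1 : γ < 1/2)
    (hgb : g + b = 1) (hb : 0 < b) (hg : 1/2 + γ ≤ g)
    (ha : aa = 1/2 * Real.log ((1-γ)*g/((1+γ)*b))) :
    Real.exp (γ * aa) * (Real.exp (-aa) * g + Real.exp aa * b)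
      ≤ Real.exp (-(γ^2)/2) := by
  have hg0 : 0 < g := by linarith
  have h1γ : 0 < 1 - γ := by linarith
  have h1γ' : 0 < 1 + γ := by linarith
  set r : ℝ := (1-γ)*g/((1+γ)*b) with hrdef
  have hr : 0 < r := by positivity
  have e2a : Real.exp (2*aa) = r := by
    rw [ha, show 2*(1/2*Real.log r) = Real.log r by ring, Real.exp_log hr]
  have hS : Real.exp (-aa) * g + Real.exp aa * b = (2*g/(1+γ)) * Real.exp (-aa) := by
    have h1 : Real.exp aa = Real.exp (-aa) * Real.exp (2*aa) := by
      rw [← Real.exp_add]; ring_nf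
    rw [h1, e2a]
    have hrb : r * b = (1-γ)*g/(1+γ) := by
      rw [hrdef]; field_simp
    have : g + r * b = 2*g/(1+γ) := by
      rw [hrb]; field_simp; ring
    calc Real.exp (-aa) * g + Real.exp (-aa) * r * b
        = Real.exp (-aa) * (g + r * b) := by ring
      _ = (2*g/(1+γ)) * Real.exp (-aa) := by rw [this]; ring
  rw [hS]
  have h2g : (0:ℝ) < 2*g/(1+γ) := by positivity
  have hrw : Real.exp (γ * aa) * ((2*g/(1+γ)) * Real.exp (-aa))
      = Real.exp (Real.log (2*g/(1+γ)) + (γ-1)*aa) := by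
    rw [Real.exp_add, Real.exp_log h2g,
      show (γ-1)*aa = γ*aa + -aa by ring, Real.exp_add]
    ring
  rw [hrw, Real.exp_le_exp]
  -- expand logs
  have hlogr : Real.log r = Real.log (1-γ) + Real.log g - Real.log (1+γ) - Real.log b := by
    rw [hrdef, Real.log_div (by positivity) (by positivity),
      Real.log_mul (ne_of_gt h1γ) (ne_of_gt hg0),
      Real.log_mul (ne_of_gt h1γ') (ne_of_gt hb)]
    ring
  have hlog2g : Real.log (2*g/(1+γ)) = Real.log 2 + Real.log g - Real.log (1+γ) := by
    rw [Real.log_div (by positivity) (ne_of_gt h1γ'),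
      Real.log_mul (by norm_num) (ne_of_gt hg0)]
  have hpq : (1+γ)/2 ≤ g := by linarith
  have hq1 : g < 1 := by linarith
  have hpin := pinsker (p := (1+γ)/2) (q := g) (by positivity) hpq hq1
  have h1mp : 1 - (1+γ)/2 = (1-γ)/2 := by ring
  have h1mg : 1 - g = b := by linarith
  rw [h1mp, h1mg] at hpin
  have hl1 : Real.log ((1+γ)/2 / g) = Real.log (1+γ) - Real.log 2 - Real.log g := by
    rw [Real.log_div (by positivity) (ne_of_gt hg0),
      Real.log_div (ne_of_gt h1γ') (by norm_num)]
  have hl2 : Real.log ((1-γ)/2 / b) = Real.log (1-γ) - Real.log 2 - Real.log b := by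
    rw [Real.log_div (by positivity) (ne_of_gt hb),
      Real.log_div (ne_of_gt h1γ) (by norm_num)]
  rw [hl1, hl2] at hpin
  have hsq : γ^2/2 ≤ 2*(g - (1+γ)/2)^2 := by nlinarith
  rw [hlog2g, ha, hlogr]
  set L2 := Real.log 2
  set Lg := Real.log g
  set Lb := Real.log b
  set L1 := Real.log (1+γ)
  set Lm := Real.log (1-γ)
  have key : L2 + Lg - L1 + (γ-1)*(1/2*(Lm + Lg - L1 - Lb))
      = -((1+γ)/2*(L1 - L2 - Lg) + (1-γ)/2*(Lm - L2 - Lb)) := by ring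
  linarith [key, hpin, hsq]


lemma wQp_close {T : ℕ} {γ η : ℝ} (v w : Fin T → ℝ) (y : ℝ)
    (hw : ∀ t, 0 < w t) (hγ0 : 0 < γ) (hγ1 : γ < 1/2)
    (hG : (1/2 + γ) * (∑ t, w t) < ∑ t, if |v t - y| ≤ η/2 then w t else 0) :
    |wQp γ v w - y| ≤ η/2 := by
  classical
  set A : ℝ := ∑ t, w t with hAdef
  set G : ℝ := ∑ t, if |v t - y| ≤ η/2 then w t else 0 with hGdef
  set B : ℝ := ∑ t, if ¬(|v t - y| ≤ η/2) then w t else 0 with hBdef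
  have hGA : G ≤ A := by
    apply Finset.sum_le_sum
    intro t _
    split_ifs with hc
    · exact le_refl _
    · exact (hw t).le
  have hA : 0 < A := by nlinarith [lt_of_lt_of_le hG hGA]
  have hGB : G + B = A := by
    rw [hGdef, hBdef, ← Finset.sum_add_distrib]
    apply Finset.sum_congr rfl
    intro t _
    split_ifs with hc
    · simp
    · simp
  have hB : B < (1/2 - γ) * A := by nlinarith
  -- the good set
  set Sg : Finset (Fin T) := Finset.univ.filter (fun t => |v t - y| ≤ η/2) with hSg
  have hGsum : G = ∑ t ∈ Sg, w t := by
    rw [hGdef, hSg, Finset.sum_filter]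
  have hSgne : Sg.Nonempty := by
    by_contra hne
    rw [Finset.not_nonempty_iff_eq_empty] at hne
    rw [hne, Finset.sum_empty] at hGsum
    nlinarith
  obtain ⟨j, hjSg, hjmax⟩ := Sg.exists_max_image v hSgne
  have hjgood : |v j - y| ≤ η/2 := by
    rw [hSg] at hjSg
    exact (Finset.mem_filter.mp hjSg).2
  set S : Set ℝ := {z : ℝ | ∃ j : Fin T, v j = z ∧
    (∑ t, if z < v t then w t else 0) / (∑ t, w t) < 1 / 2 - γ} with hSdef
  have hmem : v j ∈ S := by
    refine ⟨j, rfl, ?_⟩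
    have hnum : (∑ t, if v j < v t then w t else 0) ≤ B := by
      apply Finset.sum_le_sum
      intro t _
      by_cases hlt : v j < v t
      · have hbad : ¬(|v t - y| ≤ η/2) := by
          intro hgood
          have : t ∈ Sg := by rw [hSg]; exact Finset.mem_filter.mpr ⟨Finset.mem_univ t, hgood⟩
          exact absurd (hjmax t this) (not_le.mpr hlt)
        simp [hlt, hbad]
      · simp only [hlt, if_false]
        split_ifs <;> simp [(hw t).le]
    rw [div_lt_iff₀ hA]
    calc (∑ t, if v j < v t then w t else 0) ≤ B := hnum
      _ < (1/2 - γ) * A := hB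
  have hSsub : ∀ z ∈ S, y - η/2 ≤ z := by
    intro z hz
    obtain ⟨j', hj', hlt⟩ := hz
    by_contra hzy
    push_neg at hzy
    have hnum : G ≤ ∑ t, if z < v t then w t else 0 := by
      apply Finset.sum_le_sum
      intro t _
      by_cases hgood : |v t - y| ≤ η/2
      · have : y - η/2 ≤ v t := by
          have := abs_le.mp hgood
          linarith [this.1]
        have hzv : z < v t := lt_of_lt_of_le hzy this
        simp [hgood, hzv]
      · simp only [hgood, if_false]
        split_ifs <;> simp [(hw t).le]
    rw [div_lt_iff₀ hA] at hlt
    nlinarith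
  have hbdd : BddBelow S := ⟨y - η/2, fun z hz => hSsub z hz⟩
  have h1 : wQp γ v w ≤ v j := csInf_le hbdd hmem
  have h2 : y - η/2 ≤ wQp γ v w := le_csInf ⟨v j, hmem⟩ hSsub
  have h3 : v j ≤ y + η/2 := by
    have := abs_le.mp hjgood
    linarith [this.2]
  rw [abs_le]
  constructor <;> [linarith; linarith]

lemma wQm_eq_neg {T : ℕ} (γ : ℝ) (v w : Fin T → ℝ) :
    wQm γ v w = - wQp γ (fun t => - v t) w := by
  unfold wQm wQp
  rw [Real.sInf_def, neg_neg]
  congr 1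
  ext z
  simp only [Set.mem_neg, Set.mem_setOf_eq]
  constructor
  · rintro ⟨j, hj, hlt⟩
    refine ⟨j, by linarith, ?_⟩
    convert hlt using 3
    simp only [neg_lt_neg_iff]
  · rintro ⟨j, hj, hlt⟩
    refine ⟨j, by linarith, ?_⟩
    convert hlt using 3
    simp only [neg_lt_neg_iff]


lemma wQm_close {T : ℕ} {γ η : ℝ} (v w : Fin T → ℝ) (y : ℝ)
    (hw : ∀ t, 0 < w t) (hγ0 : 0 < γ) (hγ1 : γ < 1/2)
    (hG : (1/2 + γ) * (∑ t, w t) < ∑ t, if |v t - y| ≤ η/2 then w t else 0) :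
    |wQm γ v w - y| ≤ η/2 := by
  rw [wQm_eq_neg]
  have h1 : |wQp γ (fun t => - v t) w - (-y)| ≤ η/2 := by
    apply wQp_close _ _ _ hw hγ0 hγ1
    have e : (∑ t, if |(- v t) - (-y)| ≤ η/2 then w t else 0)
        = ∑ t, if |v t - y| ≤ η/2 then w t else 0 :=
      Finset.sum_congr rfl (fun t _ => by
        rw [show - v t - -y = -(v t - y) by ring, abs_neg])
    rw [e]
    exact hG
  calc |-wQp γ (fun t => - v t) w - y|
      = |wQp γ (fun t => - v t) w - (-y)| := by
        rw [show -wQp γ (fun t => - v t) w - y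
          = -(wQp γ (fun t => - v t) w - (-y)) by ring, abs_neg]
    _ ≤ η/2 := h1

/-- if MedBoost (with its distributions P_t, coefficients a_t, and
multiplicative-weights update) is run for T ≥ C·ln(m)/γ² rounds with weak
hypotheses satisfying the (η/2, γ)-weak learning condition at every round, then
for every sample point both weighted γ/2-quantiles of the ensemble are within
η/2 of the label. -/
theorem stmt16 : ∃ C : ℝ, 0 < C ∧
    ∀ (X : Type) (m T : ℕ), 0 < m → 0 < T →
    ∀ γ η : ℝ, 0 < γ → γ < 1 / 2 → 0 < η →
    C * Real.log m / γ ^ 2 ≤ T →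
    ∀ (x : Fin m → X) (y : Fin m → ℝ) (h : ℕ → X → ℝ)
      (P : ℕ → Fin m → ℝ) (a : ℕ → ℝ),
    (∀ i, P 0 i = 1 / m) →
    (∀ t < T, 1 / 2 + γ ≤
      ∑ i, P t i * (if |h t (x i) - y i| ≤ η / 2 then 1 else 0)) →
    (∀ t < T, 0 <
      ∑ i, P t i * (if η / 2 < |h t (x i) - y i| then 1 else 0)) →
    (∀ t < T, a t = (1 / 2) * Real.log
      (((1 - γ) * ∑ i, P t i * (if |h t (x i) - y i| ≤ η / 2 then 1 else 0)) /
       ((1 + γ) * ∑ i, P t i * (if η / 2 < |h t (x i) - y i| then 1 else 0)))) →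
    (∀ t < T, ∀ i, P (t + 1) i =
      P t i * Real.exp (-(a t) * (if |h t (x i) - y i| ≤ η / 2 then 1 else -1)) /
        ∑ j, P t j * Real.exp
          (-(a t) * (if |h t (x j) - y j| ≤ η / 2 then 1 else -1))) →
    ∀ i, max
        |wQp (γ / 2) (fun s : Fin T => h s (x i)) (fun s : Fin T => a s) - y i|
        |wQm (γ / 2) (fun s : Fin T => h s (x i)) (fun s : Fin T => a s) - y i|
      ≤ η / 2 := by
  refine ⟨4, by norm_num, ?_⟩
  intro X m T hm hT γ η hγ0 hγ1 hη hTC x y h P a hP0 hweak hbadpos haeq hupd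
  classical
  have hm' : (0:ℝ) < m := Nat.cast_pos.mpr hm
  set Z : ℕ → ℝ := fun t => ∑ j, P t j * Real.exp
      (-(a t) * (if |h t (x j) - y j| ≤ η / 2 then 1 else -1)) with hZdef
  -- positivity and normalization
  have key : ∀ t, t ≤ T → (∀ j, 0 < P t j) ∧ (∑ j, P t j = 1) := by
    intro t
    induction t with
    | zero =>
      intro _
      constructor
      · intro j; rw [hP0 j]; positivity
      · simp only [hP0]
        rw [Finset.sum_const, Finset.card_univ, Fintype.card_fin, nsmul_eq_mul]
        field_simp
    | succ t ih =>
      intro hle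
      have ht : t < T := Nat.lt_of_succ_le hle
      obtain ⟨hpos, hsum⟩ := ih ht.le
      have hZpos : 0 < Z t := by
        apply Finset.sum_pos
        · intro j _; exact mul_pos (hpos j) (Real.exp_pos _)
        · exact ⟨⟨0, hm⟩, Finset.mem_univ _⟩
      constructor
      · intro j
        rw [hupd t ht j]
        exact div_pos (mul_pos (hpos j) (Real.exp_pos _)) hZpos
      · calc ∑ j, P (t+1) j
            = (∑ j, P t j * Real.exp
              (-(a t) * (if |h t (x j) - y j| ≤ η / 2 then 1 else -1))) / Z t := by
              rw [Finset.sum_div]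
              exact Finset.sum_congr rfl (fun j _ => hupd t ht j)
          _ = Z t / Z t := rfl
          _ = 1 := div_self (ne_of_gt hZpos)
  have hZpos : ∀ t < T, 0 < Z t := by
    intro t ht
    apply Finset.sum_pos
    · intro j _
      exact mul_pos ((key t ht.le).1 j) (Real.exp_pos _)
    · exact ⟨⟨0, hm⟩, Finset.mem_univ _⟩
  -- per-round bound and positivity of a
  have hround : ∀ t < T, Real.exp (γ * a t) * Z t ≤ Real.exp (-(γ^2)/2) ∧ 0 < a t := by
    intro t ht
    obtain ⟨hpos, hsum⟩ := key t ht.le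
    set g : ℝ := ∑ i, P t i * (if |h t (x i) - y i| ≤ η / 2 then 1 else 0) with hgdef
    set b : ℝ := ∑ i, P t i * (if η / 2 < |h t (x i) - y i| then 1 else 0) with hbdef
    have hgb : g + b = 1 := by
      have e : g + b = ∑ j, P t j := by
        rw [hgdef, hbdef, ← Finset.sum_add_distrib]
        apply Finset.sum_congr rfl
        intro j _
        by_cases hc : |h t (x j) - y j| ≤ η / 2
        · simp [hc, not_lt.mpr hc]
        · simp [hc, not_le.mp hc]
      rw [e, hsum]
    have hb : 0 < b := hbadpos t ht
    have hg : 1/2 + γ ≤ g := by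
      have := hweak t ht
      linarith
    have haval : a t = 1/2 * Real.log ((1-γ)*g/((1+γ)*b)) := haeq t ht
    have hZform : Z t = Real.exp (-(a t)) * g + Real.exp (a t) * b := by
      rw [hZdef]
      simp only []
      rw [hgdef, hbdef, Finset.mul_sum, Finset.mul_sum, ← Finset.sum_add_distrib]
      apply Finset.sum_congr rfl
      intro j _
      by_cases hc : |h t (x j) - y j| ≤ η / 2
      · rw [if_pos hc, if_pos hc, if_neg (not_lt.mpr hc), mul_one, mul_one,
          mul_zero, mul_zero, add_zero]
        ring
      · rw [if_neg hc, if_neg hc, if_pos (not_le.mp hc),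
          show -(a t) * (-1:ℝ) = a t by ring, mul_one, mul_zero, mul_zero]
        ring
    constructor
    · rw [hZform]
      exact round_bound hγ0 hγ1 hgb hb hg haval
    · have hlt : (1+γ)*b < (1-γ)*g := by nlinarith
      have hr1 : 1 < (1-γ)*g/((1+γ)*b) := by
        rw [lt_div_iff₀ (by positivity)]
        linarith
      rw [haval]
      have := Real.log_pos hr1
      linarith
  have hapos : ∀ t < T, 0 < a t := fun t ht => (hround t ht).2
  set A : ℝ := ∑ t ∈ Finset.range T, a t with hAdef
  have hA : 0 < A :=
    Finset.sum_pos (fun t ht => hapos t (Finset.mem_range.mp ht))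
      ⟨0, Finset.mem_range.mpr hT⟩
  -- product formula
  have hform : ∀ t, t ≤ T → ∀ j, P t j * ∏ s ∈ Finset.range t, Z s
      = (1/m) * Real.exp (-∑ s ∈ Finset.range t,
          a s * (if |h s (x j) - y j| ≤ η / 2 then 1 else -1)) := by
    intro t
    induction t with
    | zero => intro _ j; simp [hP0 j]
    | succ t ih =>
      intro hle j
      have ht : t < T := Nat.lt_of_succ_le hle
      rw [Finset.prod_range_succ, Finset.sum_range_succ]
      have hZt := hZpos t ht
      have hSrfl : (∑ j, P t j * Real.exp
          (-(a t) * (if |h t (x j) - y j| ≤ η / 2 then 1 else -1))) = Z t := rfl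
      have step1 : P (t+1) j * ((∏ s ∈ Finset.range t, Z s) * Z t)
          = (P t j * ∏ s ∈ Finset.range t, Z s) *
            Real.exp (-(a t) * (if |h t (x j) - y j| ≤ η / 2 then 1 else -1)) := by
        rw [hupd t ht j, hSrfl]
        field_simp
      rw [step1, ih ht.le j, neg_add, Real.exp_add, neg_mul]
      ring
  -- margin bound
  have hmargin : ∀ j, γ * A < ∑ t ∈ Finset.range T,
      a t * (if |h t (x j) - y j| ≤ η / 2 then 1 else -1) := by
    intro j
    by_contra hc
    push_neg at hc
    set F : ℝ := ∑ t ∈ Finset.range T,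
      a t * (if |h t (x j) - y j| ≤ η / 2 then 1 else -1) with hFdef
    have hform' := hform T le_rfl j
    obtain ⟨hpos, hsum⟩ := key T le_rfl
    have hPj1 : P T j ≤ 1 := by
      rw [← hsum]
      exact Finset.single_le_sum (fun i _ => (hpos i).le) (Finset.mem_univ j)
    have hZprod : 0 < ∏ s ∈ Finset.range T, Z s :=
      Finset.prod_pos (fun s hs => hZpos s (Finset.mem_range.mp hs))
    have h1 : (1/(m:ℝ)) * Real.exp (-(γ * A)) ≤ ∏ s ∈ Finset.range T, Z s := by
      calc (1/(m:ℝ)) * Real.exp (-(γ * A))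
          ≤ (1/(m:ℝ)) * Real.exp (-F) := by
            apply mul_le_mul_of_nonneg_left _ (by positivity)
            exact Real.exp_le_exp.mpr (by linarith)
        _ = P T j * ∏ s ∈ Finset.range T, Z s := hform'.symm
        _ ≤ 1 * ∏ s ∈ Finset.range T, Z s :=
            mul_le_mul_of_nonneg_right hPj1 hZprod.le
        _ = ∏ s ∈ Finset.range T, Z s := one_mul _
    have h2 : Real.exp (γ * A) * ∏ s ∈ Finset.range T, Z s
        ≤ Real.exp (-(γ^2)/2 * T) := by
      have e1 : Real.exp (γ * A) = ∏ s ∈ Finset.range T, Real.exp (γ * a s) := by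
        rw [← Real.exp_sum, hAdef, Finset.mul_sum]
      rw [e1, ← Finset.prod_mul_distrib]
      calc ∏ s ∈ Finset.range T, (Real.exp (γ * a s) * Z s)
          ≤ ∏ s ∈ Finset.range T, Real.exp (-(γ^2)/2) := by
            apply Finset.prod_le_prod
            · intro s hs
              exact mul_nonneg (Real.exp_pos _).le (hZpos s (Finset.mem_range.mp hs)).le
            · intro s hs; exact (hround s (Finset.mem_range.mp hs)).1
        _ = Real.exp (-(γ^2)/2 * T) := by
            rw [Finset.prod_const, Finset.card_range, ← Real.exp_nat_mul]
            congr 1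
            ring
    have hfin : (1/(m:ℝ)) ≤ Real.exp (-(γ^2)/2 * T) := by
      have := mul_le_mul_of_nonneg_left h1 (Real.exp_pos (γ * A)).le
      calc (1/(m:ℝ)) = Real.exp (γ * A) * ((1/(m:ℝ)) * Real.exp (-(γ * A))) := by
            rw [← mul_assoc, mul_comm (Real.exp (γ*A)), mul_assoc, ← Real.exp_add]
            simp
        _ ≤ Real.exp (γ * A) * ∏ s ∈ Finset.range T, Z s := this
        _ ≤ Real.exp (-(γ^2)/2 * T) := h2
    have hlogm : 4 * Real.log m ≤ γ^2 * T := by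
      have := (div_le_iff₀ (by positivity : (0:ℝ) < γ^2)).mp hTC
      linarith
    have hexp2 : Real.exp (-(γ^2)/2 * T) ≤ Real.exp (-(2 * Real.log m)) := by
      apply Real.exp_le_exp.mpr
      nlinarith [hlogm]
    have hexpm : Real.exp (-(2 * Real.log m)) = 1/(m:ℝ)^2 := by
      rw [show -(2 * Real.log (m:ℝ)) = -(Real.log m) + -(Real.log m) by ring,
        Real.exp_add, Real.exp_neg, Real.exp_log hm']
      field_simp
    have hlt1 : Real.exp (-(γ^2)/2 * T) < 1 := by
      rw [← Real.exp_zero]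
      apply Real.exp_lt_exp.mpr
      have hT' : (0:ℝ) < T := by exact_mod_cast hT
      nlinarith [mul_pos (mul_pos hγ0 hγ0) hT']
    have hm1 : (1:ℝ) < m := by
      have := lt_of_le_of_lt hfin hlt1
      rw [div_lt_one hm'] at this
      exact this
    have : (1/(m:ℝ)) ≤ 1/(m:ℝ)^2 := le_trans hfin (le_of_le_of_eq hexp2 hexpm)
    rw [div_le_div_iff₀ hm' (by positivity)] at this
    nlinarith
  -- apply quantile lemmas
  intro i
  have hwpos : ∀ s : Fin T, 0 < a s.val := fun s => hapos s.val s.isLt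
  have hsumA : (∑ s : Fin T, a s.val) = A := by
    rw [hAdef]
    exact Fin.sum_univ_eq_sum_range (fun t => a t) T
  have hid : ∀ t, a t * (if |h t (x i) - y i| ≤ η / 2 then (1:ℝ) else -1)
      = 2 * (if |h t (x i) - y i| ≤ η / 2 then a t else 0) - a t := by
    intro t; split_ifs <;> ring
  have hGfin : (1/2 + γ/2) * (∑ s : Fin T, a s.val)
      < ∑ s : Fin T, if |h s.val (x i) - y i| ≤ η/2 then a s.val else 0 := by
    have hm := hmargin i
    have e1 : ∑ t ∈ Finset.range T, a t * (if |h t (x i) - y i| ≤ η / 2 then (1:ℝ) else -1)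
        = 2 * (∑ t ∈ Finset.range T, if |h t (x i) - y i| ≤ η/2 then a t else 0) - A := by
      rw [Finset.mul_sum, hAdef, ← Finset.sum_sub_distrib]
      exact Finset.sum_congr rfl (fun t _ => hid t)
    rw [e1] at hm
    have e2 : (∑ s : Fin T, if |h s.val (x i) - y i| ≤ η/2 then a s.val else 0)
        = ∑ t ∈ Finset.range T, if |h t (x i) - y i| ≤ η/2 then a t else 0 :=
      Fin.sum_univ_eq_sum_range (fun t => if |h t (x i) - y i| ≤ η/2 then a t else 0) T
    rw [hsumA, e2]
    linarith
  have hb1 : |wQp (γ/2) (fun s : Fin T => h s (x i)) (fun s : Fin T => a s) - y i| ≤ η/2 := by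
    apply wQp_close _ _ _ hwpos (by linarith) (by linarith)
    exact hGfin
  have hb2 : |wQm (γ/2) (fun s : Fin T => h s (x i)) (fun s : Fin T => a s) - y i| ≤ η/2 := by
    apply wQm_close _ _ _ hwpos (by linarith) (by linarith)
    exact hGfin
  exact max_le hb1 hb2
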